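/- In a repeated matrix game with cε-bounded distortion (distorted payoffs eventually within cε of a fixed matrix M with value v), if both players are ε-Hannan consistent with respect to the distorted payoffs, then almost surely v − 2(c+1)ε ≤ liminf_{t→∞} u₁(σ̂₁(t), br) and limsup_{t→∞} u₁(br, σ̂₂(t)) ≤ v + 2(c+1)ε, where σ̂_p(t) are the empirical action frequencies and u₁ is computed with respect to the undistorted matrix M. -/

import Mathlib

open MeasureTheory Filter
open scoped BigOperators

/-- Expected payoff to player 1 in the matrix game `M` under mixed strategies `σ₁, σ₂`. -/
noncomputable def payoff {m n : ℕ} (M : Fin m → Fin n → ℝ)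
    (σ₁ : Fin m → ℝ) (σ₂ : Fin n → ℝ) : ℝ :=
  ∑ i, ∑ j, σ₁ i * M i j * σ₂ j

/-- The (minimax) value of the zero-sum matrix game `M`. -/
noncomputable def gameValue {m n : ℕ} (M : Fin m → Fin n → ℝ) : ℝ :=
  ⨅ σ₂ : stdSimplex ℝ (Fin n), ⨆ σ₁ : stdSimplex ℝ (Fin m), payoff M σ₁.1 σ₂.1

set_option linter.unusedSectionVars false


lemma aux_bddAbove {k : ℕ} (f : Fin k → ℝ) : BddAbove (Set.range f) := (Set.finite_range f).bddAbove
lemma aux_bddBelow {k : ℕ} (f : Fin k → ℝ) : BddBelow (Set.range f) := (Set.finite_range f).bddBelow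

lemma aux_ciSup_le_ciSup_add {k : ℕ} [Nonempty (Fin k)] {f g : Fin k → ℝ} {a : ℝ}
    (h : ∀ i, f i ≤ g i + a) : (⨆ i, f i) ≤ (⨆ i, g i) + a :=
  ciSup_le fun i => (h i).trans (add_le_add_left (le_ciSup (aux_bddAbove g) i) a)

lemma aux_ciInf_le_ciInf_add {k : ℕ} [Nonempty (Fin k)] {f g : Fin k → ℝ} {a : ℝ}
    (h : ∀ i, f i ≤ g i + a) : (⨅ i, f i) ≤ (⨅ i, g i) + a := by
  have h2 : ∀ i, (⨅ i, f i) - a ≤ g i := fun i => by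
    have := ciInf_le (aux_bddBelow f) i; linarith [h i]
  have := le_ciInf h2; linarith

lemma aux_ciSup_const_sub {k : ℕ} [Nonempty (Fin k)] (f : Fin k → ℝ) (a : ℝ) :
    (⨆ i, (a - f i)) = a - ⨅ i, f i := by
  apply le_antisymm
  · exact ciSup_le fun i => sub_le_sub_left (ciInf_le (aux_bddBelow f) i) a
  · have h : ∀ i, a - (⨆ i, (a - f i)) ≤ f i := fun i => by
      have := le_ciSup (aux_bddAbove fun i => a - f i) i; linarith
    have := le_ciInf h; linarith

lemma aux_sum_ite (t t₀ : ℕ) :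
    ∑ s ∈ Finset.range t, (if s < t₀ then (1:ℝ) else 0) ≤ t₀ := by
  rcases le_total t t₀ with h | h
  · calc ∑ s ∈ Finset.range t, (if s < t₀ then (1:ℝ) else 0)
        ≤ ∑ _s ∈ Finset.range t, (1:ℝ) := Finset.sum_le_sum fun s _ => by split_ifs <;> norm_num
      _ = t := by simp
      _ ≤ t₀ := by exact_mod_cast h
  · rw [← Finset.sum_subset (Finset.range_subset_range.mpr h)
      (fun x _ hx => if_neg (by simpa using hx))]
    calc ∑ s ∈ Finset.range t₀, (if s < t₀ then (1:ℝ) else 0)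
        = ∑ s ∈ Finset.range t₀, (1:ℝ) :=
          Finset.sum_congr rfl fun s hs => if_pos (Finset.mem_range.mp hs)
      _ = t₀ := by simp
      _ ≤ (t₀:ℝ) := le_rfl

lemma aux_sum_dist {c ε : ℝ} (hcε : 0 ≤ c * ε) {t₀ t : ℕ} (x y : ℕ → ℝ)
    (hx : ∀ s, x s ∈ Set.Icc (0:ℝ) 1) (hy : ∀ s, y s ∈ Set.Icc (0:ℝ) 1)
    (h : ∀ s, t₀ ≤ s → |x s - y s| ≤ c * ε) :
    ∑ s ∈ Finset.range t, x s ≤ (∑ s ∈ Finset.range t, y s) + ((t₀ : ℝ) + t * (c * ε)) := by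
  have hterm : ∀ s ∈ Finset.range t,
      x s ≤ y s + ((if s < t₀ then (1:ℝ) else 0) + c * ε) := by
    intro s _
    by_cases hs : s < t₀
    · rw [if_pos hs]; have h1 := (hx s).2; have h2 := (hy s).1; linarith
    · rw [if_neg hs]
      have := abs_le.mp (h s (le_of_not_gt hs)); linarith [this.1, this.2]
  calc ∑ s ∈ Finset.range t, x s
      ≤ ∑ s ∈ Finset.range t, (y s + ((if s < t₀ then (1:ℝ) else 0) + c * ε)) :=
        Finset.sum_le_sum hterm
    _ = (∑ s ∈ Finset.range t, y s) +
        ((∑ s ∈ Finset.range t, (if s < t₀ then (1:ℝ) else 0)) + t * (c * ε)) := by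
        rw [Finset.sum_add_distrib, Finset.sum_add_distrib, Finset.sum_const,
          Finset.card_range, nsmul_eq_mul]
    _ ≤ _ := by have := aux_sum_ite t t₀; linarith

lemma aux_bddAbove' {k : ℕ} (f : Fin k → ℝ) : BddAbove (Set.range f) := (Set.finite_range f).bddAbove
lemma aux_bddBelow' {k : ℕ} (f : Fin k → ℝ) : BddBelow (Set.range f) := (Set.finite_range f).bddBelow

section game
variable {m n : ℕ} [NeZero m] [NeZero n] {M : Fin m → Fin n → ℝ}

lemma aux_payoff_nonneg (hM : ∀ i j, M i j ∈ Set.Icc (0:ℝ) 1)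
    {σ₁ : Fin m → ℝ} {σ₂ : Fin n → ℝ} (h1 : ∀ i, 0 ≤ σ₁ i) (h2 : ∀ j, 0 ≤ σ₂ j) :
    0 ≤ payoff M σ₁ σ₂ :=
  Finset.sum_nonneg fun i _ => Finset.sum_nonneg fun j _ =>
    mul_nonneg (mul_nonneg (h1 i) (hM i j).1) (h2 j)

lemma aux_payoff_le_one (hM : ∀ i j, M i j ∈ Set.Icc (0:ℝ) 1)
    {σ₁ : Fin m → ℝ} {σ₂ : Fin n → ℝ}
    (h1 : σ₁ ∈ stdSimplex ℝ (Fin m)) (h2 : σ₂ ∈ stdSimplex ℝ (Fin n)) :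
    payoff M σ₁ σ₂ ≤ 1 := by
  have : payoff M σ₁ σ₂ ≤ ∑ i, ∑ j, σ₁ i * 1 * σ₂ j :=
    Finset.sum_le_sum fun i _ => Finset.sum_le_sum fun j _ => by
      have := (hM i j).1; have := (hM i j).2; have := h1.1 i; have := h2.1 j
      apply mul_le_mul_of_nonneg_right _ (h2.1 j)
      exact mul_le_mul_of_nonneg_left (hM i j).2 (h1.1 i)
  calc payoff M σ₁ σ₂ ≤ ∑ i, ∑ j, σ₁ i * 1 * σ₂ j := this
    _ = (∑ i, σ₁ i) * (∑ j, σ₂ j) := by rw [Finset.sum_mul]; simp [Finset.mul_sum]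
    _ = 1 := by rw [h1.2, h2.2, one_mul]

instance : Nonempty (stdSimplex ℝ (Fin m)) :=
  ⟨⟨_, ite_eq_mem_stdSimplex ℝ (⟨0, Nat.pos_of_ne_zero (NeZero.ne m)⟩ : Fin m)⟩⟩

lemma aux_bddAbove_payoff (hM : ∀ i j, M i j ∈ Set.Icc (0:ℝ) 1) (τ : stdSimplex ℝ (Fin n)) :
    BddAbove (Set.range fun σ₁ : stdSimplex ℝ (Fin m) => payoff M σ₁.1 τ.1) :=
  ⟨1, by rintro x ⟨σ₁, rfl⟩; exact aux_payoff_le_one hM σ₁.2 τ.2⟩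

lemma aux_gameValue_le (hM : ∀ i j, M i j ∈ Set.Icc (0:ℝ) 1)
    {σ₂ : Fin n → ℝ} (hσ₂ : σ₂ ∈ stdSimplex ℝ (Fin n)) :
    gameValue M ≤ ⨆ i, ∑ j, M i j * σ₂ j := by
  have hbddB : BddBelow (Set.range fun τ : stdSimplex ℝ (Fin n) =>
      ⨆ σ₁ : stdSimplex ℝ (Fin m), payoff M σ₁.1 τ.1) := by
    refine ⟨0, ?_⟩
    rintro x ⟨τ, rfl⟩
    obtain ⟨σ₁⟩ := (inferInstance : Nonempty (stdSimplex ℝ (Fin m)))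
    exact le_trans (aux_payoff_nonneg hM σ₁.2.1 τ.2.1) (le_ciSup (aux_bddAbove_payoff hM τ) σ₁)
  have step1 : gameValue M ≤ ⨆ σ₁ : stdSimplex ℝ (Fin m), payoff M σ₁.1 σ₂ :=
    ciInf_le hbddB ⟨σ₂, hσ₂⟩
  refine step1.trans (ciSup_le fun σ₁ => ?_)
  calc payoff M σ₁.1 σ₂ = ∑ i, σ₁.1 i * ∑ j, M i j * σ₂ j := by
        unfold payoff; exact Finset.sum_congr rfl fun i _ => by rw [Finset.mul_sum]; simp [mul_assoc]
    _ ≤ ∑ i, σ₁.1 i * (⨆ i, ∑ j, M i j * σ₂ j) :=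
        Finset.sum_le_sum fun i _ =>
          mul_le_mul_of_nonneg_left
            (le_ciSup (f := fun i => ∑ j, M i j * σ₂ j) (aux_bddAbove' _) i) (σ₁.2.1 i)
    _ = ⨆ i, ∑ j, M i j * σ₂ j := by rw [← Finset.sum_mul, σ₁.2.2, one_mul]

lemma aux_inf_le_gameValue (hM : ∀ i j, M i j ∈ Set.Icc (0:ℝ) 1)
    {σ₁ : Fin m → ℝ} (hσ₁ : σ₁ ∈ stdSimplex ℝ (Fin m)) :
    (⨅ j, ∑ i, σ₁ i * M i j) ≤ gameValue M := by
  apply le_ciInf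
  intro τ
  have step : payoff M σ₁ τ.1 ≤ ⨆ σ₁' : stdSimplex ℝ (Fin m), payoff M σ₁'.1 τ.1 :=
    le_ciSup (aux_bddAbove_payoff hM τ) ⟨σ₁, hσ₁⟩
  refine le_trans ?_ step
  calc (⨅ j, ∑ i, σ₁ i * M i j)
      = (⨅ j', ∑ i, σ₁ i * M i j') * (∑ j, τ.1 j) := by rw [τ.2.2, mul_one]
    _ = ∑ j, (⨅ j', ∑ i, σ₁ i * M i j') * τ.1 j := Finset.mul_sum _ _ _
    _ ≤ ∑ j, (∑ i, σ₁ i * M i j) * τ.1 j :=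
        Finset.sum_le_sum fun j _ =>
          mul_le_mul_of_nonneg_right (ciInf_le (aux_bddBelow' _) j) (τ.2.1 j)
    _ = payoff M σ₁ τ.1 := by
        unfold payoff; rw [Finset.sum_comm]
        exact Finset.sum_congr rfl fun j _ => by rw [Finset.sum_mul]

lemma aux_gameValue_le_avg (hM : ∀ i j, M i j ∈ Set.Icc (0:ℝ) 1)
    (J : ℕ → Fin n) {t : ℕ} (ht : 1 ≤ t) :
    gameValue M ≤ (⨆ i, ∑ s ∈ Finset.range t, M i (J s)) / t := by
  have htpos : (0:ℝ) < t := by exact_mod_cast ht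
  set σ₂ : Fin n → ℝ := fun j => (∑ s ∈ Finset.range t, if J s = j then (1:ℝ) else 0) / t
    with hσ₂def
  have hσ₂ : σ₂ ∈ stdSimplex ℝ (Fin n) := by
    constructor
    · intro j
      apply div_nonneg _ htpos.le
      exact Finset.sum_nonneg fun s _ => by split_ifs <;> norm_num
    · simp only [hσ₂def]
      rw [← Finset.sum_div]
      rw [Finset.sum_comm]
      have : ∀ s ∈ Finset.range t, (∑ j, if J s = j then (1:ℝ) else 0) = 1 := fun s _ => by
        rw [Finset.sum_ite_eq]; simp
      rw [Finset.sum_congr rfl this]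
      simp
      omega
  have key : ∀ i, ∑ j, M i j * σ₂ j = (∑ s ∈ Finset.range t, M i (J s)) / t := by
    intro i
    simp only [hσ₂def]
    rw [eq_div_iff (ne_of_gt htpos), Finset.sum_mul]
    have : ∀ j ∈ Finset.univ, M i j * ((∑ s ∈ Finset.range t, if J s = j then (1:ℝ) else 0) / t) * t
        = ∑ s ∈ Finset.range t, (if J s = j then M i j else 0) := by
      intro j _
      rw [mul_assoc, div_mul_cancel₀ _ (ne_of_gt htpos), Finset.mul_sum]
      exact Finset.sum_congr rfl fun s _ => by split_ifs <;> simp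
    rw [Finset.sum_congr rfl this, Finset.sum_comm]
    exact Finset.sum_congr rfl fun s _ => by rw [Finset.sum_ite_eq]; simp
  have h1 := aux_gameValue_le hM hσ₂
  have h2 : (⨆ i, ∑ j, M i j * σ₂ j) ≤ (⨆ i, ∑ s ∈ Finset.range t, M i (J s)) / t := by
    refine ciSup_le fun i => ?_
    rw [key i]
    exact (div_le_div_iff_of_pos_right htpos).mpr
      (le_ciSup (f := fun i => ∑ s ∈ Finset.range t, M i (J s)) (aux_bddAbove' _) i)
  exact h1.trans h2

lemma aux_avg_le_gameValue (hM : ∀ i j, M i j ∈ Set.Icc (0:ℝ) 1)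
    (I : ℕ → Fin m) {t : ℕ} (ht : 1 ≤ t) :
    (⨅ j, ∑ s ∈ Finset.range t, M (I s) j) / t ≤ gameValue M := by
  have htpos : (0:ℝ) < t := by exact_mod_cast ht
  set σ₁ : Fin m → ℝ := fun i => (∑ s ∈ Finset.range t, if I s = i then (1:ℝ) else 0) / t
    with hσ₁def
  have hσ₁ : σ₁ ∈ stdSimplex ℝ (Fin m) := by
    constructor
    · intro i
      apply div_nonneg _ htpos.le
      exact Finset.sum_nonneg fun s _ => by split_ifs <;> norm_num
    · simp only [hσ₁def]
      rw [← Finset.sum_div, Finset.sum_comm]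
      have : ∀ s ∈ Finset.range t, (∑ i, if I s = i then (1:ℝ) else 0) = 1 := fun s _ => by
        rw [Finset.sum_ite_eq]; simp
      rw [Finset.sum_congr rfl this]
      simp
      omega
  have key : ∀ j, ∑ i, σ₁ i * M i j = (∑ s ∈ Finset.range t, M (I s) j) / t := by
    intro j
    simp only [hσ₁def]
    rw [eq_div_iff (ne_of_gt htpos), Finset.sum_mul]
    have : ∀ i ∈ Finset.univ, (∑ s ∈ Finset.range t, if I s = i then (1:ℝ) else 0) / t * M i j * t
        = ∑ s ∈ Finset.range t, (if I s = i then M i j else 0) := by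
      intro i _
      rw [mul_comm _ (M i j), mul_assoc, div_mul_cancel₀ _ (ne_of_gt htpos), Finset.mul_sum]
      exact Finset.sum_congr rfl fun s _ => by split_ifs <;> simp
    rw [Finset.sum_congr rfl this, Finset.sum_comm]
    exact Finset.sum_congr rfl fun s _ => by rw [Finset.sum_ite_eq]; simp
  have h1 := aux_inf_le_gameValue hM hσ₁
  refine le_trans ?_ h1
  refine le_ciInf fun j => ?_
  rw [key j]
  exact (div_le_div_iff_of_pos_right htpos).mpr (ciInf_le (aux_bddBelow' _) j)

end game

/-- In a repeated matrix game with `cε`-bounded distortion played by two players that are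
ε-Hannan consistent w.r.t. the distorted payoffs, almost surely
`v - 2(c+1)ε ≤ liminf u₁(σ̂₁(t), br)` and `limsup u₁(br, σ̂₂(t)) ≤ v + 2(c+1)ε`,
where the best-response utilities against the empirical frequencies are computed with
respect to the undistorted matrix `M`:
`u₁(σ̂₁(t), br) = (⨅ j, Σ_{s<t} M (I s) j)/t` and
`u₁(br, σ̂₂(t)) = (⨆ i, Σ_{s<t} M i (J s))/t`. -/
theorem stmt7 {m n : ℕ} [NeZero m] [NeZero n]
    {Ω : Type*} [MeasurableSpace Ω] (P : Measure Ω) [IsProbabilityMeasure P]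
    (M : Fin m → Fin n → ℝ) (hM : ∀ i j, M i j ∈ Set.Icc (0:ℝ) 1)
    (vtil : Ω → ℕ → Fin m → Fin n → ℝ)
    (hvtil : ∀ ω t i j, vtil ω t i j ∈ Set.Icc (0:ℝ) 1)
    (I : Ω → ℕ → Fin m) (J : Ω → ℕ → Fin n) (c ε : ℝ) (hc : 0 < c) (hε : 0 < ε)
    (hdist : ∀ᵐ ω ∂P, ∃ t₀ : ℕ, ∀ t ≥ t₀, ∀ i j, |vtil ω t i j - M i j| ≤ c * ε)
    (hHC1 : ∀ᵐ ω ∂P, limsup (fun t : ℕ =>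
        ((⨆ i, ∑ s ∈ Finset.range t, vtil ω s i (J ω s)) -
          ∑ s ∈ Finset.range t, vtil ω s (I ω s) (J ω s)) / (t : ℝ)) atTop ≤ ε)
    (hHC2 : ∀ᵐ ω ∂P, limsup (fun t : ℕ =>
        ((⨆ j, ∑ s ∈ Finset.range t, (1 - vtil ω s (I ω s) j)) -
          ∑ s ∈ Finset.range t, (1 - vtil ω s (I ω s) (J ω s))) / (t : ℝ)) atTop ≤ ε) :
    ∀ᵐ ω ∂P,
      gameValue M - 2 * (c + 1) * ε ≤ liminf (fun t : ℕ =>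
          (⨅ j, ∑ s ∈ Finset.range t, M (I ω s) j) / (t : ℝ)) atTop ∧
      limsup (fun t : ℕ =>
          (⨆ i, ∑ s ∈ Finset.range t, M i (J ω s)) / (t : ℝ)) atTop ≤
        gameValue M + 2 * (c + 1) * ε := by
  classical
  haveI : Nonempty (Fin m) := ⟨⟨0, Nat.pos_of_ne_zero (NeZero.ne m)⟩⟩
  haveI : Nonempty (Fin n) := ⟨⟨0, Nat.pos_of_ne_zero (NeZero.ne n)⟩⟩
  have hcε : 0 ≤ c * ε := (mul_pos hc hε).le
  filter_upwards [hdist, hHC1, hHC2] with ω hd h1 h2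
  obtain ⟨t₀, ht₀⟩ := hd
  -- key pointwise numerator inequalities
  have key : ∀ t : ℕ, t₀ ≤ t → 1 ≤ t →
      ((⨆ i, ∑ s ∈ Finset.range t, M i (J ω s)) ≤
        (t:ℝ) * gameValue M + 2*((t₀:ℝ) + t*(c*ε)) +
          ((⨆ i, ∑ s ∈ Finset.range t, vtil ω s i (J ω s)) -
            ∑ s ∈ Finset.range t, vtil ω s (I ω s) (J ω s)) +
          ((⨆ j, ∑ s ∈ Finset.range t, (1 - vtil ω s (I ω s) j)) -
            ∑ s ∈ Finset.range t, (1 - vtil ω s (I ω s) (J ω s)))) ∧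
      ((t:ℝ) * gameValue M ≤
        (⨅ j, ∑ s ∈ Finset.range t, M (I ω s) j) + 2*((t₀:ℝ) + t*(c*ε)) +
          ((⨆ i, ∑ s ∈ Finset.range t, vtil ω s i (J ω s)) -
            ∑ s ∈ Finset.range t, vtil ω s (I ω s) (J ω s)) +
          ((⨆ j, ∑ s ∈ Finset.range t, (1 - vtil ω s (I ω s) j)) -
            ∑ s ∈ Finset.range t, (1 - vtil ω s (I ω s) (J ω s)))) := by
    intro t htt ht1
    have htpos : (0:ℝ) < t := by exact_mod_cast ht1
    have step1 : (⨆ i, ∑ s ∈ Finset.range t, M i (J ω s)) ≤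
        (⨆ i, ∑ s ∈ Finset.range t, vtil ω s i (J ω s)) + ((t₀:ℝ) + t*(c*ε)) :=
      aux_ciSup_le_ciSup_add fun i =>
        aux_sum_dist hcε _ _ (fun s => hM i (J ω s)) (fun s => hvtil ω s i (J ω s))
          (fun s hs => by rw [abs_sub_comm]; exact ht₀ s hs i (J ω s))
    have step2 : (⨅ j, ∑ s ∈ Finset.range t, vtil ω s (I ω s) j) ≤
        (⨅ j, ∑ s ∈ Finset.range t, M (I ω s) j) + ((t₀:ℝ) + t*(c*ε)) :=
      aux_ciInf_le_ciInf_add fun j =>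
        aux_sum_dist hcε _ _ (fun s => hvtil ω s (I ω s) j) (fun s => hM (I ω s) j)
          (fun s hs => ht₀ s hs (I ω s) j)
    have step3 : (⨅ j, ∑ s ∈ Finset.range t, M (I ω s) j) ≤ (t:ℝ) * gameValue M := by
      have := aux_avg_le_gameValue hM (I ω) ht1
      rw [div_le_iff₀ htpos] at this; linarith
    have step4 : (t:ℝ) * gameValue M ≤ (⨆ i, ∑ s ∈ Finset.range t, M i (J ω s)) := by
      have := aux_gameValue_le_avg hM (J ω) ht1
      rw [le_div_iff₀ htpos] at this; linarith
    have e1 : ∀ j, ∑ s ∈ Finset.range t, (1 - vtil ω s (I ω s) j)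
        = (t:ℝ) - ∑ s ∈ Finset.range t, vtil ω s (I ω s) j := by
      intro j; rw [Finset.sum_sub_distrib]; simp
    have e2 : (⨆ j, ∑ s ∈ Finset.range t, (1 - vtil ω s (I ω s) j))
        = (t:ℝ) - ⨅ j, ∑ s ∈ Finset.range t, vtil ω s (I ω s) j := by
      simp only [e1]; exact aux_ciSup_const_sub _ _
    have e3 : ∑ s ∈ Finset.range t, (1 - vtil ω s (I ω s) (J ω s))
        = (t:ℝ) - ∑ s ∈ Finset.range t, vtil ω s (I ω s) (J ω s) := by
      rw [Finset.sum_sub_distrib]; simp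
    constructor
    · rw [e2, e3]; linarith
    · rw [e2, e3]; linarith
  -- boundedness facts
  have hf1_le : ∀ t : ℕ, ((⨆ i, ∑ s ∈ Finset.range t, vtil ω s i (J ω s)) -
      ∑ s ∈ Finset.range t, vtil ω s (I ω s) (J ω s)) / (t:ℝ) ≤ 1 := by
    intro t
    rcases Nat.eq_zero_or_pos t with rfl | ht
    · simp [ciSup_const]
    · have htpos : (0:ℝ) < t := by exact_mod_cast ht
      rw [div_le_one htpos]
      have hsup : (⨆ i, ∑ s ∈ Finset.range t, vtil ω s i (J ω s)) ≤ (t:ℝ) :=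
        ciSup_le fun i =>
          calc ∑ s ∈ Finset.range t, vtil ω s i (J ω s) ≤ ∑ _s ∈ Finset.range t, (1:ℝ) :=
              Finset.sum_le_sum fun s _ => (hvtil ω s i (J ω s)).2
            _ = t := by simp
      have hB : 0 ≤ ∑ s ∈ Finset.range t, vtil ω s (I ω s) (J ω s) :=
        Finset.sum_nonneg fun s _ => (hvtil ω s (I ω s) (J ω s)).1
      linarith
  have hf2_le : ∀ t : ℕ, ((⨆ j, ∑ s ∈ Finset.range t, (1 - vtil ω s (I ω s) j)) -
      ∑ s ∈ Finset.range t, (1 - vtil ω s (I ω s) (J ω s))) / (t:ℝ) ≤ 1 := by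
    intro t
    rcases Nat.eq_zero_or_pos t with rfl | ht
    · simp [ciSup_const]
    · have htpos : (0:ℝ) < t := by exact_mod_cast ht
      rw [div_le_one htpos]
      have hsup : (⨆ j, ∑ s ∈ Finset.range t, (1 - vtil ω s (I ω s) j)) ≤ (t:ℝ) :=
        ciSup_le fun j =>
          calc ∑ s ∈ Finset.range t, (1 - vtil ω s (I ω s) j) ≤ ∑ _s ∈ Finset.range t, (1:ℝ) :=
              Finset.sum_le_sum fun s _ => by have := (hvtil ω s (I ω s) j).1; linarith
            _ = t := by simp
      have hB : 0 ≤ ∑ s ∈ Finset.range t, (1 - vtil ω s (I ω s) (J ω s)) :=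
        Finset.sum_nonneg fun s _ => by have := (hvtil ω s (I ω s) (J ω s)).2; linarith
      linarith
  have hbdd1 : IsBoundedUnder (· ≤ ·) atTop (fun t : ℕ =>
      ((⨆ i, ∑ s ∈ Finset.range t, vtil ω s i (J ω s)) -
        ∑ s ∈ Finset.range t, vtil ω s (I ω s) (J ω s)) / (t:ℝ)) :=
    isBoundedUnder_of ⟨1, hf1_le⟩
  have hbdd2 : IsBoundedUnder (· ≤ ·) atTop (fun t : ℕ =>
      ((⨆ j, ∑ s ∈ Finset.range t, (1 - vtil ω s (I ω s) j)) -
        ∑ s ∈ Finset.range t, (1 - vtil ω s (I ω s) (J ω s))) / (t:ℝ)) :=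
    isBoundedUnder_of ⟨1, hf2_le⟩
  have hC_le_one : ∀ t : ℕ, (⨅ j, ∑ s ∈ Finset.range t, M (I ω s) j) / (t:ℝ) ≤ 1 := by
    intro t
    rcases Nat.eq_zero_or_pos t with rfl | ht
    · simp [ciInf_const]
    · have htpos : (0:ℝ) < t := by exact_mod_cast ht
      rw [div_le_one htpos]
      calc (⨅ j, ∑ s ∈ Finset.range t, M (I ω s) j)
          ≤ ∑ s ∈ Finset.range t, M (I ω s) (Classical.arbitrary (Fin n)) :=
            ciInf_le (aux_bddBelow' _) _
        _ ≤ ∑ _s ∈ Finset.range t, (1:ℝ) :=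
            Finset.sum_le_sum fun s _ => (hM (I ω s) _).2
        _ = t := by simp
  have hA_nonneg : ∀ t : ℕ, 0 ≤ (⨆ i, ∑ s ∈ Finset.range t, M i (J ω s)) / (t:ℝ) := by
    intro t
    apply div_nonneg _ (Nat.cast_nonneg t)
    refine le_trans ?_ (le_ciSup (aux_bddAbove' _) (Classical.arbitrary (Fin m)))
    exact Finset.sum_nonneg fun s _ => (hM _ (J ω s)).1
  -- eventual smallness of the error terms
  have evgen : ∀ δ : ℝ, 0 < δ → ∀ᶠ t : ℕ in atTop,
      ((⨆ i, ∑ s ∈ Finset.range t, vtil ω s i (J ω s)) -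
        ∑ s ∈ Finset.range t, vtil ω s (I ω s) (J ω s)) / (t:ℝ) < ε + δ/4 ∧
      ((⨆ j, ∑ s ∈ Finset.range t, (1 - vtil ω s (I ω s) j)) -
        ∑ s ∈ Finset.range t, (1 - vtil ω s (I ω s) (J ω s))) / (t:ℝ) < ε + δ/4 ∧
      (t₀:ℝ)/(t:ℝ) < δ/4 ∧ max t₀ 1 ≤ t := by
    intro δ hδ
    have ev1 := eventually_lt_of_limsup_lt (lt_of_le_of_lt h1 (by linarith : ε < ε + δ/4)) hbdd1
    have ev2 := eventually_lt_of_limsup_lt (lt_of_le_of_lt h2 (by linarith : ε < ε + δ/4)) hbdd2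
    have ev3 : ∀ᶠ t : ℕ in atTop, (t₀:ℝ)/(t:ℝ) < δ/4 :=
      (tendsto_const_div_atTop_nhds_zero_nat (t₀:ℝ)).eventually_lt_const (by linarith)
    have ev4 : ∀ᶠ t : ℕ in atTop, max t₀ 1 ≤ t := eventually_ge_atTop _
    filter_upwards [ev1, ev2, ev3, ev4] with t a b cc d using ⟨a, b, cc, d⟩
  constructor
  · -- liminf part
    refine le_of_forall_pos_le_add fun δ hδ => ?_
    have hlim : gameValue M - 2*(c+1)*ε - δ ≤ liminf (fun t : ℕ =>
        (⨅ j, ∑ s ∈ Finset.range t, M (I ω s) j) / (t : ℝ)) atTop := by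
      refine le_liminf_of_le ((isBoundedUnder_of ⟨1, hC_le_one⟩).isCoboundedUnder_ge) ?_
      filter_upwards [evgen δ hδ] with t ht
      obtain ⟨hf1t, hf2t, ht3, ht4⟩ := ht
      have htt₀ : t₀ ≤ t := le_trans (le_max_left _ _) ht4
      have ht1 : 1 ≤ t := le_trans (le_max_right _ _) ht4
      have htpos : (0:ℝ) < t := by exact_mod_cast ht1
      have htne : (t:ℝ) ≠ 0 := ne_of_gt htpos
      have keyC := (key t htt₀ ht1).2
      have hdiv := (div_le_div_iff_of_pos_right htpos).mpr keyC
      rw [mul_comm ((t:ℝ)) (gameValue M), mul_div_assoc, div_self htne, mul_one] at hdiv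
      have hexp : ((⨅ j, ∑ s ∈ Finset.range t, M (I ω s) j) + 2*((t₀:ℝ) + t*(c*ε)) +
          ((⨆ i, ∑ s ∈ Finset.range t, vtil ω s i (J ω s)) -
            ∑ s ∈ Finset.range t, vtil ω s (I ω s) (J ω s)) +
          ((⨆ j, ∑ s ∈ Finset.range t, (1 - vtil ω s (I ω s) j)) -
            ∑ s ∈ Finset.range t, (1 - vtil ω s (I ω s) (J ω s)))) / (t:ℝ)
        = (⨅ j, ∑ s ∈ Finset.range t, M (I ω s) j) / (t:ℝ) + 2*(c*ε) + 2*((t₀:ℝ)/(t:ℝ)) +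
          ((⨆ i, ∑ s ∈ Finset.range t, vtil ω s i (J ω s)) -
            ∑ s ∈ Finset.range t, vtil ω s (I ω s) (J ω s)) / (t:ℝ) +
          ((⨆ j, ∑ s ∈ Finset.range t, (1 - vtil ω s (I ω s) j)) -
            ∑ s ∈ Finset.range t, (1 - vtil ω s (I ω s) (J ω s))) / (t:ℝ) := by
        field_simp
        ring
      rw [hexp] at hdiv
      nlinarith [hf1t, hf2t, ht3, hδ, hε, hc]
    linarith
  · -- limsup part
    refine le_of_forall_pos_le_add fun δ hδ => ?_
    refine limsup_le_of_le ((isBoundedUnder_of ⟨0, hA_nonneg⟩).isCoboundedUnder_le) ?_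
    filter_upwards [evgen δ hδ] with t ht
    obtain ⟨hf1t, hf2t, ht3, ht4⟩ := ht
    have htt₀ : t₀ ≤ t := le_trans (le_max_left _ _) ht4
    have ht1 : 1 ≤ t := le_trans (le_max_right _ _) ht4
    have htpos : (0:ℝ) < t := by exact_mod_cast ht1
    have htne : (t:ℝ) ≠ 0 := ne_of_gt htpos
    have keyA := (key t htt₀ ht1).1
    have hdiv := (div_le_div_iff_of_pos_right htpos).mpr keyA
    have hexp : ((t:ℝ) * gameValue M + 2*((t₀:ℝ) + t*(c*ε)) +
        ((⨆ i, ∑ s ∈ Finset.range t, vtil ω s i (J ω s)) -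
          ∑ s ∈ Finset.range t, vtil ω s (I ω s) (J ω s)) +
        ((⨆ j, ∑ s ∈ Finset.range t, (1 - vtil ω s (I ω s) j)) -
          ∑ s ∈ Finset.range t, (1 - vtil ω s (I ω s) (J ω s)))) / (t:ℝ)
      = gameValue M + 2*(c*ε) + 2*((t₀:ℝ)/(t:ℝ)) +
        ((⨆ i, ∑ s ∈ Finset.range t, vtil ω s i (J ω s)) -
          ∑ s ∈ Finset.range t, vtil ω s (I ω s) (J ω s)) / (t:ℝ) +
        ((⨆ j, ∑ s ∈ Finset.range t, (1 - vtil ω s (I ω s) j)) -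
          ∑ s ∈ Finset.range t, (1 - vtil ω s (I ω s) (J ω s))) / (t:ℝ) := by
      field_simp
      ring
    rw [hexp] at hdiv
    nlinarith [hf1t, hf2t, ht3, hδ, hε, hc]
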